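/- Let C be a category with colimits of small κ-filtered diagrams, and I a set of morphisms of C whose domains and codomains are all κ-presentable. Then the class I^⧄ of morphisms with the right lifting property with respect to I, regarded as a full subcategory of the arrow category Fun(2, C), is closed under colimits of small κ-filtered diagrams in Fun(2, C). -/

import Mathlib

universe v u u₂

open CategoryTheory Limits Opposite

noncomputable section

/-- A small category with fewer than `κ` morphisms. -/
def CardSmallCat (K : Type v) [SmallCategory K] (κ : Cardinal.{v}) : Prop :=
  Cardinal.mk (Σ p : K × K, p.1 ⟶ p.2) < κ

/-- `J` is `κ`-filtered: every `κ`-small diagram in `J` admits a cocone. -/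
def IsCardFiltered (J : Type v) [SmallCategory J] (κ : Cardinal.{v}) : Prop :=
  ∀ (K : Type v) [SmallCategory K], CardSmallCat K κ → ∀ F : K ⥤ J, Nonempty (Cocone F)

/-- `A` is `κ`-presentable: `Hom(A,-)` preserves colimits of small `κ`-filtered diagrams. -/
def IsCardPresentable {C : Type u} [Category.{v} C] (κ : Cardinal.{v}) (A : C) : Prop :=
  ∀ (J : Type v) [SmallCategory J], IsCardFiltered J κ →
    Nonempty (PreservesColimitsOfShape J (coyoneda.obj (op A)))

/-- `A` is `(κ, lam)`-presentable: `Hom(A,-)` preserves colimits of `lam`-small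
`κ`-filtered diagrams. -/
def IsRelPresentable {C : Type u} [Category.{v} C] (κ lam : Cardinal.{v}) (A : C) : Prop :=
  ∀ (J : Type v) [SmallCategory J], CardSmallCat J lam → IsCardFiltered J κ →
    Nonempty (PreservesColimitsOfShape J (coyoneda.obj (op A)))

/-- `C` is a `κ`-accessible category. -/
def IsCardAccessible (C : Type u) [Category.{v} C] (κ : Cardinal.{v}) : Prop :=
  (∀ (J : Type v) [SmallCategory J], IsCardFiltered J κ → HasColimitsOfShape J C) ∧
  ∃ G : Set C, Small.{v} G ∧ (∀ A ∈ G, IsCardPresentable κ A) ∧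
    ∀ X : C, ∃ (J : Type v) (inst : SmallCategory J) (F : J ⥤ C) (c : Cocone F),
      IsCardFiltered J κ ∧ (∀ j, F.obj j ∈ G) ∧ Nonempty (IsColimit c) ∧ Nonempty (c.pt ≅ X)

/-- `F` preserves colimits of small `κ`-filtered diagrams. -/
def PreservesCardFiltered {C : Type u} [Category.{v} C] {D : Type u₂} [Category.{v} D]
    (F : C ⥤ D) (κ : Cardinal.{v}) : Prop :=
  ∀ (J : Type v) [SmallCategory J], IsCardFiltered J κ →
    Nonempty (PreservesColimitsOfShape J F)

/-- `F` is a strongly `κ`-accessible functor. -/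
def StronglyCardAccessible {C : Type u} [Category.{v} C] {D : Type u₂} [Category.{v} D]
    (F : C ⥤ D) (κ : Cardinal.{v}) : Prop :=
  IsCardAccessible C κ ∧ IsCardAccessible D κ ∧ PreservesCardFiltered F κ ∧
    ∀ X : C, IsCardPresentable κ X → IsCardPresentable κ (F.obj X)

/-- `κ ◁ lam`: `κ` is sharply less than `lam`. -/
def SharplyLess (κ lam : Cardinal.{u}) : Prop :=
  κ < lam ∧ ∀ X : Type u, Cardinal.mk X < lam →
    ∃ S : Set {s : Set X // Cardinal.mk s < κ},
      Cardinal.mk S < lam ∧ ∀ t : {s : Set X // Cardinal.mk s < κ}, ∃ w ∈ S, t.1 ⊆ w.1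

/-- The class of morphisms with the right lifting property with respect to `I`. -/
def RLPclass {M : Type u} [Category.{v} M] (I : MorphismProperty M) : MorphismProperty M :=
  fun _ _ f => ∀ ⦃A B : M⦄ (g : A ⟶ B), I g → HasLiftingProperty g f

lemma arrowLeftIsColimit {C : Type u} [Category.{v} C] {J : Type v} [SmallCategory J]
    [HasColimitsOfShape J C] (F : J ⥤ Arrow C) {c : Cocone F} (hc : IsColimit c) :
    Nonempty (IsColimit (Arrow.leftFunc.mapCocone c)) ∧
      Nonempty (IsColimit (Arrow.rightFunc.mapCocone c)) := by
  let t₁ := colimit.isColimit (F ⋙ Arrow.leftFunc)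
  let t₂ := colimit.isColimit (F ⋙ Arrow.rightFunc)
  let d : Cocone F := Comma.coconeOfPreserves F t₁ (colimit.cocone (F ⋙ Arrow.rightFunc))
  have hd : IsColimit d := Comma.coconeOfPreservesIsColimit F t₁ t₂
  have e : d ≅ c := hd.uniqueUpToIso hc
  have h₁ : IsColimit (Arrow.leftFunc.mapCocone d) :=
    IsColimit.ofIsoColimit t₁ (Cocones.ext (Iso.refl _) (by intro j; simp [d]; exact Category.comp_id _))
  have h₂ : IsColimit (Arrow.rightFunc.mapCocone d) :=
    IsColimit.ofIsoColimit t₂ (Cocones.ext (Iso.refl _) (by intro j; simp [d]; exact Category.comp_id _))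
  exact ⟨⟨IsColimit.ofIsoColimit h₁ ((Cocones.functoriality F Arrow.leftFunc).mapIso e)⟩,
    ⟨IsColimit.ofIsoColimit h₂ ((Cocones.functoriality F Arrow.rightFunc).mapIso e)⟩⟩


lemma isFiltered_of_isCardFiltered (J : Type v) [SmallCategory J] {κ : Cardinal.{v}}
    (hκ : κ.IsRegular) (hJ : IsCardFiltered J κ) : IsFiltered J := by
  apply IsFiltered.of_cocone_nonempty.{v}
  intro K _ _ G
  refine hJ K ?_ G
  refine lt_of_lt_of_le ?_ hκ.aleph0_le
  have : Finite (Σ p : K × K, p.1 ⟶ p.2) := by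
    have := FinCategory.fintypeObj (J := K)
    have : ∀ p : K × K, Finite (p.1 ⟶ p.2) := fun p => by
      have := FinCategory.fintypeHom (J := K) p.1 p.2; infer_instance
    infer_instance
  exact Cardinal.lt_aleph0_of_finite _

/-- If the (co)domains of `I` are `κ`-presentable, `I^⧄` is closed under small `κ`-filtered
colimits in the arrow category. -/
theorem stmt15 {C : Type u} [Category.{v} C] (κ : Cardinal.{v}) (hκ : κ.IsRegular)
    (hcolim : ∀ (J : Type v) [SmallCategory J], IsCardFiltered J κ → HasColimitsOfShape J C)
    (I : MorphismProperty C)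
    (hI : ∀ ⦃X Y : C⦄ (f : X ⟶ Y), I f → IsCardPresentable κ X ∧ IsCardPresentable κ Y) :
    ∀ (J : Type v) [SmallCategory J], IsCardFiltered J κ →
      ∀ (F : J ⥤ Arrow C), (∀ j, RLPclass I (F.obj j).hom) →
        ∀ (c : Cocone F), Nonempty (IsColimit c) → RLPclass I c.pt.hom := by
  intro J _ hJ F hF c hne A B g hg
  obtain ⟨hc⟩ := hne
  obtain ⟨hA, hB⟩ := hI g hg
  haveI : HasColimitsOfShape J C := hcolim J hJ
  haveI : IsFiltered J := isFiltered_of_isCardFiltered J hκ hJ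
  obtain ⟨⟨hL⟩, ⟨hR⟩⟩ := arrowLeftIsColimit F hc
  haveI pA : PreservesColimitsOfShape J (coyoneda.obj (op A)) := (hA J hJ).some
  haveI pB : PreservesColimitsOfShape J (coyoneda.obj (op B)) := (hB J hJ).some
  have hLA := isColimitOfPreserves (coyoneda.obj (op A)) hL
  have hRA := isColimitOfPreserves (coyoneda.obj (op A)) hR
  have hRB := isColimitOfPreserves (coyoneda.obj (op B)) hR
  -- helper equations
  have wl : ∀ {a b : J} (f : a ⟶ b), (F.map f).left ≫ (c.ι.app b).left = (c.ι.app a).left := by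
    intro a b f; rw [← Arrow.comp_left, c.w]
  have wr : ∀ {a b : J} (f : a ⟶ b), (F.map f).right ≫ (c.ι.app b).right = (c.ι.app a).right := by
    intro a b f; rw [← Arrow.comp_right, c.w]
  have wh : ∀ (a : J), (c.ι.app a).left ≫ c.pt.hom = (F.obj a).hom ≫ (c.ι.app a).right := by
    intro a; simpa using Arrow.w (c.ι.app a)
  constructor
  intro u v sq
  obtain ⟨j, y, hy⟩ := Types.jointly_surjective _ hLA u
  obtain ⟨j', z, hz⟩ := Types.jointly_surjective _ hRB v
  replace hy : y ≫ (c.ι.app j).left = u := hy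
  replace hz : z ≫ (c.ι.app j').right = v := hz
  let k := IsFiltered.max j j'
  let u₁ : A ⟶ (F.obj k).left := y ≫ (F.map (IsFiltered.leftToMax j j')).left
  let v₁ : B ⟶ (F.obj k).right := z ≫ (F.map (IsFiltered.rightToMax j j')).right
  have hu₁ : u₁ ≫ (c.ι.app k).left = u := by
    exact (Category.assoc _ _ _).trans ((congrArg (y ≫ ·) (wl (IsFiltered.leftToMax j j'))).trans hy)
  have hv₁ : v₁ ≫ (c.ι.app k).right = v := by
    exact (Category.assoc _ _ _).trans ((congrArg (z ≫ ·) (wr (IsFiltered.rightToMax j j'))).trans hz)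
  have key : (u₁ ≫ (F.obj k).hom) ≫ (c.ι.app k).right = (g ≫ v₁) ≫ (c.ι.app k).right := by
    calc (u₁ ≫ (F.obj k).hom) ≫ (c.ι.app k).right
        = u₁ ≫ (F.obj k).hom ≫ (c.ι.app k).right := by rw [Category.assoc]
      _ = u₁ ≫ (c.ι.app k).left ≫ c.pt.hom := by rw [wh]
      _ = (u₁ ≫ (c.ι.app k).left) ≫ c.pt.hom := by simp [u₁]
      _ = u ≫ c.pt.hom := by rw [hu₁]
      _ = g ≫ v := sq.w
      _ = g ≫ v₁ ≫ (c.ι.app k).right := by rw [hv₁]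
      _ = (g ≫ v₁) ≫ (c.ι.app k).right := by simp [v₁]
  obtain ⟨l, f₁, f₂, hf⟩ := (Types.FilteredColimit.isColimit_eq_iff
    ((F ⋙ Arrow.rightFunc) ⋙ coyoneda.obj (op A)) hRA
    (i := k) (j := k) (xi := u₁ ≫ (F.obj k).hom) (xj := g ≫ v₁)).mp key
  replace hf : (u₁ ≫ (F.obj k).hom) ≫ (F.map f₁).right = (g ≫ v₁) ≫ (F.map f₂).right := hf
  let h : k ⟶ IsFiltered.coeq f₁ f₂ := f₁ ≫ IsFiltered.coeqHom f₁ f₂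
  let m := IsFiltered.coeq f₁ f₂
  have hsplit : ∀ (X : C) (x : X ⟶ (F.obj k).right) (q : k ⟶ l),
      x ≫ (F.map (q ≫ IsFiltered.coeqHom f₁ f₂)).right
        = (x ≫ (F.map q).right) ≫ (F.map (IsFiltered.coeqHom f₁ f₂)).right := by
    intro X x q; rw [F.map_comp]; simp
  have heq : (u₁ ≫ (F.obj k).hom) ≫ (F.map h).right = (g ≫ v₁) ≫ (F.map h).right := by
    have hc2 : (g ≫ v₁) ≫ (F.map (f₂ ≫ IsFiltered.coeqHom f₁ f₂)).right
        = (g ≫ v₁) ≫ (F.map h).right := by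
      rw [← IsFiltered.coeq_condition f₁ f₂]
    rw [← hc2, hsplit _ _ f₁, hsplit _ _ f₂, hf]
  let u₂ : A ⟶ (F.obj m).left := u₁ ≫ (F.map h).left
  let v₂ : B ⟶ (F.obj m).right := v₁ ≫ (F.map h).right
  have whm : (F.map h).left ≫ (F.obj m).hom = (F.obj k).hom ≫ (F.map h).right := by
    exact Arrow.w (F.map h)
  have sq₂ : CommSq u₂ g (F.obj m).hom v₂ := by
    constructor
    calc u₂ ≫ (F.obj m).hom = u₁ ≫ (F.map h).left ≫ (F.obj m).hom := by
            rw [← Category.assoc]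
      _ = u₁ ≫ (F.obj k).hom ≫ (F.map h).right := by rw [whm]
      _ = (u₁ ≫ (F.obj k).hom) ≫ (F.map h).right := by simp [u₁]
      _ = (g ≫ v₁) ≫ (F.map h).right := heq
      _ = g ≫ v₂ := by rw [Category.assoc]
  haveI := hF m g hg
  exact ⟨⟨{ l := sq₂.lift ≫ (c.ι.app m).left
            fac_left := by
              rw [← Category.assoc, sq₂.fac_left]
              show (u₁ ≫ (F.map h).left) ≫ (c.ι.app m).left = u
              rw [Category.assoc, wl, hu₁]
            fac_right := by
              rw [Category.assoc, wh, ← Category.assoc, sq₂.fac_right]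
              show (v₁ ≫ (F.map h).right) ≫ (c.ι.app m).right = v
              rw [Category.assoc, wr, hv₁] }⟩⟩
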